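/- Let n ≥ 1, σ > 0, θ1 ≠ 0, and let x_1, …, x_n and θ2 be real numbers with θ2 + x_i ≠ 0 for all i. Define M_{l1,l2} = (1/n)·Σ_{i=1}^{n} x_i^{l1}/(θ2+x_i)^{l2}, V_{1,1} = M_{2,2} − M_{1,1}², V_{1,2} = M_{2,4} − M_{1,2}², Cov12 = M_{2,3} − M_{1,1}·M_{1,2}, D = V_{1,1}·V_{1,2} − Cov12², and assume D ≠ 0. Let I be the 3×3 matrix (n/σ²)·[[1, M_{1,1}, −θ1·M_{1,2}], [M_{1,1}, M_{2,2}, −θ1·M_{2,3}], [−θ1·M_{1,2}, −θ1·M_{2,3}, θ1²·M_{2,4}]]. For t = 1, 2, 3 let Q_t be the symmetric 3×3 matrix whose only nonzero entries are at positions (2,3), (3,2) and (3,3), given by: Q_1(2,3) = −(n/σ²)·M_{1,2}, Q_1(3,3) = (2nθ1/σ²)·M_{1,3}; Q_2(2,3) = −(n/σ²)·M_{2,3}, Q_2(3,3) = (2nθ1/σ²)·M_{2,4}; Q_3(2,3) = (nθ1/σ²)·M_{2,4}, Q_3(3,3) = −(2nθ1²/σ²)·M_{2,5}. Then ½·trace(I⁻¹·Q_1)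 = (V_{1,1}·M_{1,3} − Cov12·M_{1,2})/(θ1·D), ½·trace(I⁻¹·Q_2) = (V_{1,1}·M_{2,4} − Cov12·M_{2,3})/(θ1·D), and ½·trace(I⁻¹·Q_3) = −(V_{1,1}·M_{2,5} − Cov12·M_{2,4})/D. -/

import Mathlib

set_option maxHeartbeats 1000000


/-- Closed-form Firth corrections `A_t = ½·trace(I⁻¹·Q_t)` of the Emax score function
in terms of the design moments, variances, covariance and `D`. -/
theorem emax_firth_corrections (n : ℕ) (hn : 1 ≤ n)
    (σ θ1 θ2 : ℝ) (hσ : 0 < σ) (hθ1 : θ1 ≠ 0)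
    (x : Fin n → ℝ) (hx : ∀ i, θ2 + x i ≠ 0)
    (M : ℕ → ℕ → ℝ)
    (hM : ∀ l1 l2 : ℕ, M l1 l2 = (1 / (n : ℝ)) * ∑ i, (x i) ^ l1 / (θ2 + x i) ^ l2)
    (V11 V12 Cov12 D : ℝ)
    (hV11 : V11 = M 2 2 - (M 1 1) ^ 2)
    (hV12 : V12 = M 2 4 - (M 1 2) ^ 2)
    (hCov : Cov12 = M 2 3 - M 1 1 * M 1 2)
    (hD : D = V11 * V12 - Cov12 ^ 2)
    (hDne : D ≠ 0)
    (I : Matrix (Fin 3) (Fin 3) ℝ)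
    (hI : I = ((n : ℝ) / σ ^ 2) •
      !![1, M 1 1, -θ1 * M 1 2;
         M 1 1, M 2 2, -θ1 * M 2 3;
         -θ1 * M 1 2, -θ1 * M 2 3, θ1 ^ 2 * M 2 4])
    (Q1 Q2 Q3 : Matrix (Fin 3) (Fin 3) ℝ)
    (hQ1 : Q1 = !![0, 0, 0;
                   0, 0, -((n : ℝ) / σ ^ 2) * M 1 2;
                   0, -((n : ℝ) / σ ^ 2) * M 1 2, (2 * (n : ℝ) * θ1 / σ ^ 2) * M 1 3])
    (hQ2 : Q2 = !![0, 0, 0;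
                   0, 0, -((n : ℝ) / σ ^ 2) * M 2 3;
                   0, -((n : ℝ) / σ ^ 2) * M 2 3, (2 * (n : ℝ) * θ1 / σ ^ 2) * M 2 4])
    (hQ3 : Q3 = !![0, 0, 0;
                   0, 0, ((n : ℝ) * θ1 / σ ^ 2) * M 2 4;
                   0, ((n : ℝ) * θ1 / σ ^ 2) * M 2 4,
                     -(2 * (n : ℝ) * θ1 ^ 2 / σ ^ 2) * M 2 5]) :
    (1 / 2 : ℝ) * (I⁻¹ * Q1).trace = (V11 * M 1 3 - Cov12 * M 1 2) / (θ1 * D) ∧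
    (1 / 2 : ℝ) * (I⁻¹ * Q2).trace = (V11 * M 2 4 - Cov12 * M 2 3) / (θ1 * D) ∧
    (1 / 2 : ℝ) * (I⁻¹ * Q3).trace = -((V11 * M 2 5 - Cov12 * M 2 4) / D) := by
  have hc : ((n : ℝ) / σ ^ 2) ≠ 0 := by
    have hn' : (0:ℝ) < n := by exact_mod_cast hn
    positivity
  set c : ℝ := (n : ℝ) / σ ^ 2 with hcdef
  set m11 := M 1 1; set m12 := M 1 2; set m13 := M 1 3
  set m22 := M 2 2; set m23 := M 2 3; set m24 := M 2 4; set m25 := M 2 5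
  subst hV11 hV12 hCov hD
  set D := (m22 - m11 ^ 2) * (m24 - m12 ^ 2) - (m23 - m11 * m12) ^ 2 with hDdef
  clear_value c m11 m12 m13 m22 m23 m24 m25 D
  have hJ : I⁻¹ = !![(m22*m24 - m23^2)/(c*D), -(m11*m24 - m12*m23)/(c*D),
                      (m12*m22 - m11*m23)/(θ1*c*D);
                    -(m11*m24 - m12*m23)/(c*D), (m24 - m12^2)/(c*D),
                      (m23 - m11*m12)/(θ1*c*D);
                    (m12*m22 - m11*m23)/(θ1*c*D), (m23 - m11*m12)/(θ1*c*D),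
                      (m22 - m11^2)/(θ1^2*c*D)] := by
    apply Matrix.inv_eq_right_inv
    subst hI
    ext i j
    fin_cases i <;> fin_cases j <;>
      simp [Matrix.mul_apply, Fin.sum_univ_three, Matrix.one_apply] <;>
      field_simp <;> simp only [hDdef] <;> ring
  refine ⟨?_, ?_, ?_⟩ <;>
    simp only [hJ, hQ1, hQ2, hQ3, Matrix.trace, Matrix.diag, Matrix.mul_apply,
      Fin.sum_univ_three, Matrix.cons_val', Matrix.cons_val_zero, Matrix.cons_val_one,
      Matrix.head_cons, Matrix.empty_val', Matrix.cons_val_fin_one, Matrix.head_fin_const,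
      Fin.isValue, mul_zero, zero_add, add_zero, hcdef, Matrix.vecHead, Matrix.vecTail,
      Function.comp_apply, Matrix.of_apply, Matrix.cons_val_two, Matrix.cons_val_succ,
      Matrix.tail_cons] <;>
    field_simp <;> ring
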